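/- Let (X, 𝒜, μ) be a measure space and let p > 1, q > 1 with 1/p + 1/q = 1. If f, g : X → ℝ are nonnegative integrable functions with ∫_X f dμ = 1 and ∫_X g dμ = 1, then 1 − ∫_X f^{1/p} g^{1/q} dμ ≥ (1/(2pq)) (∫_X |f − g| dμ)^2. -/

import Mathlib

open MeasureTheory
open Real
open scoped ENNReal NNReal


lemma quarter_rpow (t : ℝ) : ((1:ℝ)/4) ^ t = 4 ^ (-t) := by
  rw [one_div, ← Real.rpow_neg_one (4:ℝ), ← Real.rpow_mul (by norm_num : (0:ℝ) ≤ 4)]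
  congr 1; ring

/-- Key AM-GM estimate: `u^(-l) v^(l-1) + (1-u)^(-l) (1-v)^(l-1) ≥ 4`. -/
lemma claimM {l u v : ℝ} (hl0 : 0 ≤ l) (hl1 : l ≤ 1)
    (hu0 : 0 < u) (hu1 : u < 1) (hv0 : 0 < v) (hv1 : v < 1) :
    4 ≤ u ^ (-l) * v ^ (l - 1) + (1 - u) ^ (-l) * (1 - v) ^ (l - 1) := by
  have hu' : (0:ℝ) < 1 - u := by linarith
  have hv' : (0:ℝ) < 1 - v := by linarith
  set A := u ^ (-l) * v ^ (l - 1) with hA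
  set B := (1 - u) ^ (-l) * (1 - v) ^ (l - 1) with hB
  have hApos : 0 < A := mul_pos (rpow_pos_of_pos hu0 _) (rpow_pos_of_pos hv0 _)
  have hBpos : 0 < B := mul_pos (rpow_pos_of_pos hu' _) (rpow_pos_of_pos hv' _)
  have hABprod : A * B = (u * (1 - u)) ^ (-l) * ((v * (1 - v)) ^ (l - 1)) := by
    rw [Real.mul_rpow hu0.le hu'.le, Real.mul_rpow hv0.le hv'.le]; ring
  have h4 : (4:ℝ) ≤ A * B := by
    rw [hABprod]
    have h1 : (4:ℝ)^l ≤ (u * (1 - u)) ^ (-l) := by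
      have hle : u * (1 - u) ≤ 1/4 := by nlinarith [sq_nonneg (u - 1/2)]
      have h := Real.rpow_le_rpow_of_nonpos (mul_pos hu0 hu') hle (neg_nonpos.mpr hl0)
      rwa [quarter_rpow, neg_neg] at h
    have h2 : (4:ℝ)^(1-l) ≤ (v * (1 - v)) ^ (l - 1) := by
      have hle : v * (1 - v) ≤ 1/4 := by nlinarith [sq_nonneg (v - 1/2)]
      have h := Real.rpow_le_rpow_of_nonpos (mul_pos hv0 hv') hle (by linarith : l - 1 ≤ 0)
      rwa [quarter_rpow, neg_sub] at h
    calc (4:ℝ) = (4:ℝ)^l * (4:ℝ)^(1-l) := by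
            rw [← Real.rpow_add (by norm_num : (0:ℝ) < 4)]; norm_num
      _ ≤ _ :=
            mul_le_mul h1 h2 (Real.rpow_nonneg (by norm_num) _)
              (le_trans (Real.rpow_nonneg (by norm_num) _) h1)
  have hsq : Real.sqrt (A * B) * Real.sqrt (A * B) = A * B :=
    Real.mul_self_sqrt (by positivity)
  have h2' : (2:ℝ) ≤ Real.sqrt (A * B) := by
    nlinarith [Real.sqrt_nonneg (A*B)]
  nlinarith [sq_nonneg (Real.sqrt A - Real.sqrt B), Real.sq_sqrt hApos.le,
    Real.sq_sqrt hBpos.le, Real.sqrt_nonneg A, Real.sqrt_nonneg B,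
    Real.sqrt_mul hApos.le B]

/-- `Ψ(a,b) = ∂₁G ≤ 0` for `0 ≤ b ≤ a < 1`. -/
lemma psi_nonpos {l a b : ℝ} (hl0 : 0 < l) (hl1 : l < 1) (ha0 : 0 < a) (ha1 : a < 1)
    (hb0 : 0 ≤ b) (hba : b ≤ a) :
    (1-l) * a^(-l) * b^l - (1-l) * (1-a)^(-l) * (1-b)^l + 4*l*(1-l)*(a-b) ≤ 0 := by
  have ha1' : (0:ℝ) < 1 - a := by linarith
  set c1 : ℝ := (1-l) * a^(-l) with hc1
  set c2 : ℝ := (1-l) * (1-a)^(-l) with hc2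
  set c3 : ℝ := 4*l*(1-l) with hc3
  set F : ℝ → ℝ := fun t => c1 * t^l - c2 * (1-t)^l + c3*(a-t) with hF
  have key : ∀ t ∈ Set.Ioo (0:ℝ) 1, HasDerivAt F
      (c1 * (l * t^(l-1)) - c2 * (-(l * (1-t)^(l-1))) + c3 * (-1)) t := by
    intro t ht
    have h1 : HasDerivAt (fun t:ℝ => t ^ l) (l * t^(l-1)) t :=
      Real.hasDerivAt_rpow_const (Or.inl (ne_of_gt ht.1))
    have h2 : HasDerivAt (fun t:ℝ => (1-t) ^ l) (-(l * (1-t)^(l-1))) t := by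
      have h3 : HasDerivAt (fun t:ℝ => (1:ℝ) - t) (-1) t := (hasDerivAt_id t).const_sub 1
      have h4 : HasDerivAt (fun s:ℝ => s ^ l) (l * (1-t)^(l-1)) (1-t) :=
        Real.hasDerivAt_rpow_const (Or.inl (by have := ht.2; intro h; linarith))
      have := h4.comp t h3
      simpa [mul_comm, Function.comp_def] using this
    have h5 : HasDerivAt (fun t:ℝ => a - t) (-1) t := (hasDerivAt_id t).const_sub a
    exact ((h1.const_mul c1).sub (h2.const_mul c2)).add (h5.const_mul c3)
  have hc : Continuous F := by
    have hc1' : Continuous fun t:ℝ => t ^ l := Real.continuous_rpow_const hl0.le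
    have hc2' : Continuous fun t:ℝ => (1-t) ^ l :=
      hc1'.comp (continuous_const.sub continuous_id)
    exact ((continuous_const.mul hc1').sub (continuous_const.mul hc2')).add
      (continuous_const.mul (continuous_const.sub continuous_id))
  have hmono : MonotoneOn F (Set.Icc 0 a) := by
    apply monotoneOn_of_deriv_nonneg (convex_Icc 0 a) hc.continuousOn
    · intro t ht
      rw [interior_Icc] at ht
      exact (key t ⟨ht.1, lt_trans ht.2 ha1⟩).differentiableAt.differentiableWithinAt
    · intro t ht
      rw [interior_Icc] at ht
      have ht' : t ∈ Set.Ioo (0:ℝ) 1 := ⟨ht.1, lt_trans ht.2 ha1⟩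
      rw [(key t ht').deriv]
      have hM := claimM hl0.le hl1.le ha0 ha1 ht'.1 ht'.2
      have hll : 0 < l * (1-l) := by nlinarith
      rw [hc1, hc2, hc3]
      nlinarith [Real.rpow_pos_of_pos ha0 (-l), Real.rpow_pos_of_pos ha1' (-l),
        Real.rpow_pos_of_pos ht'.1 (l-1), Real.rpow_pos_of_pos (sub_pos.mpr ht'.2) (l-1),
        mul_le_mul_of_nonneg_left hM (le_of_lt hll)]
    -- done
  have hFa : F a = 0 := by
    have e1 : a^(-l) * a^l = 1 := by
      rw [← Real.rpow_add ha0]; simp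
    have e2 : (1-a)^(-l) * (1-a)^l = 1 := by
      rw [← Real.rpow_add ha1']; simp
    have e3 : F a = (1-l) * (a^(-l) * a^l) - (1-l) * ((1-a)^(-l) * (1-a)^l) := by
      rw [hF, hc1, hc2, hc3]; ring
    rw [e3, e1, e2]; ring
  have hb_mem : b ∈ Set.Icc (0:ℝ) a := ⟨hb0, hba⟩
  have ha_mem : a ∈ Set.Icc (0:ℝ) a := ⟨le_trans hb0 hba, le_refl a⟩
  have := hmono hb_mem ha_mem hba
  rw [hFa] at this
  calc (1-l) * a^(-l) * b^l - (1-l) * (1-a)^(-l) * (1-b)^l + 4*l*(1-l)*(a-b)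
      = F b := by simp only [hF, hc1, hc2, hc3]
    _ ≤ 0 := this

lemma rpow_split {x l : ℝ} (hx : 0 ≤ x) : x^(1-l) * x^l = x := by
  rw [← Real.rpow_add' hx (by norm_num : (1-l) + l ≠ 0)]
  norm_num

/-- The binary key inequality. -/
lemma binaryB {l a b : ℝ} (hl0 : 0 < l) (hl1 : l < 1) (hb0 : 0 ≤ b) (hba : b ≤ a)
    (ha1 : a ≤ 1) :
    a^(1-l) * b^l + (1-a)^(1-l) * (1-b)^l + 2*l*(1-l)*(a-b)^2 ≤ 1 := by
  have ha0 : 0 ≤ a := le_trans hb0 hba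
  rcases eq_or_lt_of_le hba with heq | hlt
  · subst heq
    rw [rpow_split hb0, rpow_split (by linarith : (0:ℝ) ≤ 1-b)]
    nlinarith
  · -- b < a
    have hb1 : b < 1 := lt_of_lt_of_le hlt ha1
    set G : ℝ → ℝ := fun t =>
      t^(1-l) * b^l + (1-t)^(1-l) * (1-b)^l + 2*l*(1-l)*(t-b)^2 with hG
    have key : ∀ t ∈ Set.Ioo (0:ℝ) 1, HasDerivAt G
        (((1-l) * t^(1-l-1)) * b^l + (-((1-l) * (1-t)^(1-l-1))) * (1-b)^l
          + 2*l*(1-l) * (2*(t-b)^1*1)) t := by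
      intro t ht
      have h1 : HasDerivAt (fun t:ℝ => t ^ (1-l)) ((1-l) * t^(1-l-1)) t :=
        Real.hasDerivAt_rpow_const (Or.inl (ne_of_gt ht.1))
      have h2 : HasDerivAt (fun t:ℝ => (1-t) ^ (1-l)) (-((1-l) * (1-t)^(1-l-1))) t := by
        have h3 : HasDerivAt (fun t:ℝ => (1:ℝ) - t) (-1) t := (hasDerivAt_id t).const_sub 1
        have h4 : HasDerivAt (fun s:ℝ => s ^ (1-l)) ((1-l) * (1-t)^(1-l-1)) (1-t) :=
          Real.hasDerivAt_rpow_const (Or.inl (by have := ht.2; intro h; linarith))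
        have := h4.comp t h3
        simpa [mul_comm, Function.comp_def] using this
      have h5 : HasDerivAt (fun t:ℝ => (t-b)^2) (2*(t-b)^1*1) t := by
        exact ((hasDerivAt_id t).sub_const b).pow 2
      exact ((h1.mul_const _).add (h2.mul_const _)).add (h5.const_mul _)
    have hcont : Continuous G := by
      have hc1' : Continuous fun t:ℝ => t ^ (1-l) := Real.continuous_rpow_const (by linarith)
      have hc2' : Continuous fun t:ℝ => (1-t) ^ (1-l) :=
        hc1'.comp (continuous_const.sub continuous_id)
      exact ((hc1'.mul continuous_const).add (hc2'.mul continuous_const)).add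
        (continuous_const.mul ((continuous_id.sub continuous_const).pow 2))
    have hanti : AntitoneOn G (Set.Icc b 1) := by
      apply antitoneOn_of_deriv_nonpos (convex_Icc b 1) hcont.continuousOn
      · intro t ht
        rw [interior_Icc] at ht
        exact (key t ⟨lt_of_le_of_lt hb0 ht.1, ht.2⟩).differentiableAt.differentiableWithinAt
      · intro t ht
        rw [interior_Icc] at ht
        have ht' : t ∈ Set.Ioo (0:ℝ) 1 := ⟨lt_of_le_of_lt hb0 ht.1, ht.2⟩
        rw [(key t ht').deriv]
        have hpsi := psi_nonpos hl0 hl1 ht'.1 ht'.2 hb0 (le_of_lt ht.1)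
        have he : (1-l-1 : ℝ) = -l := by ring
        rw [he]
        nlinarith [hpsi]
    have hGb : G b = 1 := by
      have e3 : G b = b^(1-l) * b^l + (1-b)^(1-l) * (1-b)^l := by
        simp only [hG]; ring
      rw [e3, rpow_split hb0, rpow_split (by linarith : (0:ℝ) ≤ 1-b)]
      ring
    calc a^(1-l) * b^l + (1-a)^(1-l) * (1-b)^l + 2*l*(1-l)*(a-b)^2 = G a := by
          simp only [hG]
      _ ≤ G b := hanti ⟨le_refl b, hb1.le⟩ ⟨hba, ha1⟩ hba
      _ = 1 := hGb


lemma memLp_rpow_inv {X : Type*} [MeasurableSpace X] {μ : Measure X} {f : X → ℝ} {p : ℝ}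
    (hp0 : 0 < p) (hfm : Measurable f) (hf : 0 ≤ f) (hfi : Integrable f μ) :
    MemLp (fun x => f x ^ (1/p)) (ENNReal.ofReal p) μ := by
  have hmeas : Measurable fun x => f x ^ (1/p) :=
    (Real.continuous_rpow_const (by positivity)).measurable.comp hfm
  refine ⟨hmeas.aestronglyMeasurable, ?_⟩
  rw [eLpNorm_eq_lintegral_rpow_enorm_toReal (by simp [ENNReal.ofReal_eq_zero]; linarith)
    ENNReal.ofReal_ne_top]
  rw [ENNReal.toReal_ofReal hp0.le]
  have hkey : ∀ x, ‖f x ^ (1/p)‖ₑ ^ p = ENNReal.ofReal (f x) := by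
    intro x
    rw [← ofReal_norm, Real.norm_of_nonneg (Real.rpow_nonneg (hf x) _),
      ENNReal.ofReal_rpow_of_nonneg (Real.rpow_nonneg (hf x) _) hp0.le]
    congr 1
    rw [← Real.rpow_mul (hf x), one_div, inv_mul_cancel₀ (ne_of_gt hp0), Real.rpow_one]
  simp_rw [hkey]
  exact ENNReal.rpow_lt_top_of_nonneg (by positivity) hfi.lintegral_lt_top.ne

lemma holder_integral {X : Type*} [MeasurableSpace X] (μ : Measure X) {p q : ℝ}
    (hpq : Real.HolderConjugate p q) {f g : X → ℝ} (hfm : Measurable f) (hgm : Measurable g)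
    (hf : 0 ≤ f) (hg : 0 ≤ g) (hfi : Integrable f μ) (hgi : Integrable g μ) :
    ∫ x, f x ^ (1/p) * g x ^ (1/q) ∂μ
      ≤ (∫ x, f x ∂μ) ^ (1/p) * (∫ x, g x ∂μ) ^ (1/q) := by
  have hp0 : 0 < p := hpq.pos
  have hq0 : 0 < q := hpq.symm.pos
  have hF := memLp_rpow_inv hp0 hfm hf hfi
  have hG := memLp_rpow_inv hq0 hgm hg hgi
  have H := MeasureTheory.integral_mul_norm_le_Lp_mul_Lq hpq hF hG
  have e1 : ∫ x, ‖f x ^ (1/p)‖ * ‖g x ^ (1/q)‖ ∂μ = ∫ x, f x ^ (1/p) * g x ^ (1/q) ∂μ := by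
    apply integral_congr_ae
    filter_upwards with x
    rw [Real.norm_of_nonneg (Real.rpow_nonneg (hf x) _),
      Real.norm_of_nonneg (Real.rpow_nonneg (hg x) _)]
  have e2 : ∫ x, ‖f x ^ (1/p)‖ ^ p ∂μ = ∫ x, f x ∂μ := by
    apply integral_congr_ae
    filter_upwards with x
    rw [Real.norm_of_nonneg (Real.rpow_nonneg (hf x) _), ← Real.rpow_mul (hf x),
      one_div, inv_mul_cancel₀ (ne_of_gt hp0), Real.rpow_one]
  have e3 : ∫ x, ‖g x ^ (1/q)‖ ^ q ∂μ = ∫ x, g x ∂μ := by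
    apply integral_congr_ae
    filter_upwards with x
    rw [Real.norm_of_nonneg (Real.rpow_nonneg (hg x) _), ← Real.rpow_mul (hg x),
      one_div, inv_mul_cancel₀ (ne_of_gt hq0), Real.rpow_one]
  rw [e1, e2, e3] at H
  exact H

theorem main_aux {X : Type*} [MeasurableSpace X] (μ : Measure X)
    (p q : ℝ) (hp : 1 < p) (hq : 1 < q) (hpq : 1/p + 1/q = 1)
    (f g : X → ℝ) (hfm : Measurable f) (hgm : Measurable g)
    (hf : 0 ≤ f) (hg : 0 ≤ g)
    (hfi : Integrable f μ) (hgi : Integrable g μ)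
    (hfs : ∫ x, f x ∂μ = 1) (hgs : ∫ x, g x ∂μ = 1) :
    1 - ∫ x, (f x) ^ (1/p) * (g x) ^ (1/q) ∂μ
      ≥ (1/(2*p*q)) * (∫ x, |f x - g x| ∂μ)^2 := by
  have hp0 : 0 < p := by linarith
  have hq0 : 0 < q := by linarith
  have hpq' : Real.HolderConjugate p q := Real.holderConjugate_iff.mpr ⟨hp, by rw [← one_div, ← one_div]; exact hpq⟩
  set l : ℝ := 1/q with hl
  have hl0 : 0 < l := by positivity
  have hl1 : l < 1 := by rw [hl, div_lt_one hq0]; linarith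
  have hpl : (1:ℝ)/p = 1 - l := by rw [hl]; linarith
  set A : Set X := {x | g x < f x} with hA
  have hAm : MeasurableSet A := measurableSet_lt hgm hfm
  set α : ℝ := ∫ x in A, f x ∂μ with hα
  set β : ℝ := ∫ x in A, g x ∂μ with hβ
  have hfc : ∫ x in Aᶜ, f x ∂μ = 1 - α := by
    have h := integral_add_compl hAm hfi
    rw [hfs] at h; linarith
  have hgc : ∫ x in Aᶜ, g x ∂μ = 1 - β := by
    have h := integral_add_compl hAm hgi
    rw [hgs] at h; linarith
  have hβ0 : 0 ≤ β := setIntegral_nonneg hAm (fun x _ => hg x)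
  have hβα : β ≤ α :=
    setIntegral_mono_on hgi.integrableOn hfi.integrableOn hAm (fun x hx => le_of_lt hx)
  have hα1 : α ≤ 1 := by
    have h0 : 0 ≤ ∫ x in Aᶜ, f x ∂μ := setIntegral_nonneg hAm.compl (fun x _ => hf x)
    linarith
  set P : X → ℝ := fun x => f x ^ (1-l) * g x ^ l with hP
  have hPm : Measurable P :=
    ((Real.continuous_rpow_const (by linarith)).measurable.comp hfm).mul
      ((Real.continuous_rpow_const hl0.le).measurable.comp hgm)
  have hP0 : ∀ x, 0 ≤ P x := fun x =>
    mul_nonneg (Real.rpow_nonneg (hf x) _) (Real.rpow_nonneg (hg x) _)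
  have hPle : ∀ x, P x ≤ (1-l) * f x + l * g x := fun x =>
    Real.geom_mean_le_arith_mean2_weighted (by linarith) hl0.le (hf x) (hg x) (by ring)
  have hPi : Integrable P μ := by
    apply Integrable.mono' ((hfi.const_mul (1-l)).add (hgi.const_mul l))
      hPm.aestronglyMeasurable
    filter_upwards with x
    rw [Real.norm_of_nonneg (hP0 x)]
    exact hPle x
  have hHA : ∫ x in A, P x ∂μ ≤ α ^ (1-l) * β ^ l := by
    have h := holder_integral (μ.restrict A) hpq' hfm hgm hf hg hfi.restrict hgi.restrict
    simp only [hpl, ← hl] at h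
    exact h
  have hHAc : ∫ x in Aᶜ, P x ∂μ ≤ (1-α) ^ (1-l) * (1-β) ^ l := by
    have h := holder_integral (μ.restrict Aᶜ) hpq' hfm hgm hf hg hfi.restrict hgi.restrict
    simp only [hpl, ← hl] at h
    rw [hfc, hgc] at h
    exact h
  have hBB := binaryB hl0 hl1 hβ0 hβα hα1
  have hsplitP : ∫ x, P x ∂μ = (∫ x in A, P x ∂μ) + ∫ x in Aᶜ, P x ∂μ :=
    (integral_add_compl hAm hPi).symm
  have hPbound : ∫ x, P x ∂μ ≤ 1 - 2*l*(1-l)*(α-β)^2 := by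
    rw [hsplitP]; linarith
  have hT : ∫ x, |f x - g x| ∂μ = 2*(α - β) := by
    have h1 : ∫ x in A, |f x - g x| ∂μ = α - β := by
      rw [setIntegral_congr_fun hAm
        (fun x hx => abs_of_pos (sub_pos.mpr hx) :
          Set.EqOn (fun x => |f x - g x|) (fun x => f x - g x) A)]
      rw [integral_sub hfi.integrableOn hgi.integrableOn]
    have h2 : ∫ x in Aᶜ, |f x - g x| ∂μ = (1-β) - (1-α) := by
      rw [setIntegral_congr_fun hAm.compl
        (fun x hx => by
          show |f x - g x| = g x - f x
          have hxx : ¬ g x < f x := by simpa [hA] using hx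
          rw [abs_of_nonpos (sub_nonpos.mpr (not_lt.mp hxx)), neg_sub] :
          Set.EqOn (fun x => |f x - g x|) (fun x => g x - f x) Aᶜ)]
      rw [integral_sub hgi.integrableOn hfi.integrableOn, hgc, hfc]
    calc ∫ x, |f x - g x| ∂μ
        = (∫ x in A, |f x - g x| ∂μ) + ∫ x in Aᶜ, |f x - g x| ∂μ :=
          (integral_add_compl hAm (hfi.sub hgi).abs).symm
      _ = 2*(α-β) := by rw [h1, h2]; ring
  rw [hT]
  simp only [hpl]
  rw [show (fun x => f x ^ (1-l) * g x ^ l) = P from hP.symm] -- fold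
  have heq : (1/(2*p*q)) * (2*(α-β))^2 = 2*l*(1-l)*(α-β)^2 := by
    rw [hl] at *
    have : (1:ℝ) - 1/q = 1/p := by linarith
    rw [this]
    field_simp
  rw [ge_iff_le, heq]
  linarith

theorem holder_L1_stability_integral
    {X : Type*} [MeasurableSpace X] (μ : Measure X)
    (p q : ℝ) (hp : 1 < p) (hq : 1 < q) (hpq : 1/p + 1/q = 1)
    (f g : X → ℝ) (hf : 0 ≤ f) (hg : 0 ≤ g)
    (hfi : Integrable f μ) (hgi : Integrable g μ)
    (hfs : ∫ x, f x ∂μ = 1) (hgs : ∫ x, g x ∂μ = 1) :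
    1 - ∫ x, (f x) ^ (1/p) * (g x) ^ (1/q) ∂μ
      ≥ (1/(2*p*q)) * (∫ x, |f x - g x| ∂μ)^2 := by
  have hfa : AEMeasurable f μ := hfi.aemeasurable
  have hga : AEMeasurable g μ := hgi.aemeasurable
  set f' : X → ℝ := fun x => max (hfa.mk f x) 0 with hf'
  set g' : X → ℝ := fun x => max (hga.mk g x) 0 with hg'
  have hf'm : Measurable f' := hfa.measurable_mk.max measurable_const
  have hg'm : Measurable g' := hga.measurable_mk.max measurable_const
  have hff' : f =ᵐ[μ] f' := by
    filter_upwards [hfa.ae_eq_mk] with x hx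
    rw [hf']
    dsimp only
    rw [← hx]
    exact (max_eq_left (hf x)).symm
  have hgg' : g =ᵐ[μ] g' := by
    filter_upwards [hga.ae_eq_mk] with x hx
    rw [hg']
    dsimp only
    rw [← hx]
    exact (max_eq_left (hg x)).symm
  have hfi' : Integrable f' μ := hfi.congr hff'
  have hgi' : Integrable g' μ := hgi.congr hgg'
  have hf'0 : 0 ≤ f' := fun x => le_max_right _ _
  have hg'0 : 0 ≤ g' := fun x => le_max_right _ _
  have hfs' : ∫ x, f' x ∂μ = 1 := by rw [← integral_congr_ae hff']; exact hfs
  have hgs' : ∫ x, g' x ∂μ = 1 := by rw [← integral_congr_ae hgg']; exact hgs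
  have key := main_aux μ p q hp hq hpq f' g' hf'm hg'm hf'0 hg'0 hfi' hgi' hfs' hgs'
  have e1 : ∫ x, f x ^ (1/p) * g x ^ (1/q) ∂μ = ∫ x, f' x ^ (1/p) * g' x ^ (1/q) ∂μ :=
    integral_congr_ae (by filter_upwards [hff', hgg'] with x h1 h2; rw [h1, h2])
  have e2 : ∫ x, |f x - g x| ∂μ = ∫ x, |f' x - g' x| ∂μ :=
    integral_congr_ae (by filter_upwards [hff', hgg'] with x h1 h2; rw [h1, h2])
  rw [e1, e2]
  exact key
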